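/- Let (G, +, ν) be a complete abelian normed group and define a ⪯ b if there exists a sequence (a_j) in G with a_1 = a, b = ∑_j a_j, and ν(b) = ∑_j ν(a_j). Then ⪯ is transitive: if a ⪯ b and b ⪯ c then a ⪯ c. -/
import Mathlib


open Filter Topology

/-- A sequence `a` is a pseudo-decomposition of `b`: `b = ∑ a j` with
`ν(b) = ∑ ν(a j)`. -/
def IsPseudoDecomp {G : Type*} [NormedAddCommGroup G] (a : ℕ → G) (b : G) : Prop :=
  HasSum a b ∧ HasSum (fun j => ‖a j‖) ‖b‖

/-- `x ⪯ b`: `x` appears as a term of some pseudo-decomposition of `b`. -/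
def PseudoLE {G : Type*} [NormedAddCommGroup G] (x b : G) : Prop :=
  ∃ a : ℕ → G, IsPseudoDecomp a b ∧ ∃ j, a j = x

theorem pseudoLE_trans {G : Type*} [NormedAddCommGroup G] [CompleteSpace G]
    (a b c : G) (hab : PseudoLE a b) (hbc : PseudoLE b c) : PseudoLE a c := by
  obtain ⟨u, ⟨hu1, hu2⟩, j0, hj0⟩ := hab
  obtain ⟨d, ⟨hd1, hd2⟩, k0, hk0⟩ := hbc
  -- f is d with the k0 term replaced by 0
  set f : ℕ → G := Function.update d k0 0 with hf
  have hfsum : HasSum f (c - b) := by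
    have h := hd1.update k0 0
    rw [hk0] at h
    simpa [sub_eq_neg_add] using h
  have hfnorm : HasSum (fun j => ‖f j‖) (‖c‖ - ‖b‖) := by
    have h := hd2.update k0 0
    have heq : (fun j => ‖f j‖) = Function.update (fun j => ‖d j‖) k0 0 := by
      funext j
      by_cases hjk : j = k0
      · subst hjk; simp [hf]
      · simp [hf, hjk]
    rw [heq]
    rw [hk0] at h
    simpa [sub_eq_neg_add] using h
  -- interleave u (even indices) with f (odd indices)
  set e : ℕ → G := fun n => if Even n then u (n / 2) else f (n / 2) with he
  have heven : ∀ k, e (2 * k) = u k := fun k => by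
    simp [he, Nat.mul_div_cancel_left _ two_pos]
  have hodd : ∀ k, e (2 * k + 1) = f k := fun k => by
    have h2 : ¬ Even (2 * k + 1) := by simp [Nat.even_add_one, parity_simps]
    simp [he, h2, Nat.mul_add_div two_pos]
  have h1 : HasSum (fun k => e (2 * k)) b := by
    rw [funext heven]; exact hu1
  have h2 : HasSum (fun k => e (2 * k + 1)) (c - b) := by
    rw [funext hodd]; exact hfsum
  have h3 : HasSum (fun k => ‖e (2 * k)‖) ‖b‖ := by
    have : (fun k => ‖e (2 * k)‖) = fun k => ‖u k‖ := by
      funext k; rw [heven]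
    rw [this]; exact hu2
  have h4 : HasSum (fun k => ‖e (2 * k + 1)‖) (‖c‖ - ‖b‖) := by
    have : (fun k => ‖e (2 * k + 1)‖) = fun k => ‖f k‖ := by
      funext k; rw [hodd]
    rw [this]; exact hfnorm
  refine ⟨e, ⟨?_, ?_⟩, 2 * j0, by rw [heven, hj0]⟩
  · have := HasSum.even_add_odd (f := e) h1 h2
    rwa [add_sub_cancel] at this
  · have := HasSum.even_add_odd (f := fun n => ‖e n‖) h3 h4
    rwa [add_sub_cancel] at this
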